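/- Let G be a nilpotent group acting by orientation-preserving homeomorphisms of [0,1], let x₀ ∈ [0,1], and let g, h ∈ G. Then the intervals h(J_g(x₀)) and J_g(x₀) either are equal or have disjoint interiors. -/

import Mathlib

/-- The unit interval `[0,1]` as a subset of `ℝ`. -/
noncomputable def II : Set ℝ := Set.Icc 0 1

/-- `f : ℝ → ℝ` restricts to an orientation-preserving homeomorphism of `[0,1]`. -/
def IsOPHomeoI (f : ℝ → ℝ) : Prop :=
  Set.BijOn f II II ∧ StrictMonoOn f II ∧ ContinuousOn f II

/-- `g` is `β`-Hölder continuous on `[0,1]` with constant `C`. -/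
def HolderOnI (β C : ℝ) (g : ℝ → ℝ) : Prop :=
  ∀ x ∈ II, ∀ y ∈ II, |g x - g y| ≤ C * |x - y| ^ β

/-- `f : ℝ → ℝ` restricts to an orientation-preserving `C¹` diffeomorphism of `[0,1]`:
a strictly increasing bijection of `[0,1]`, continuously differentiable on `[0,1]`
with everywhere positive derivative. -/
def IsC1DiffeoI (f : ℝ → ℝ) : Prop :=
  Set.BijOn f II II ∧ StrictMonoOn f II ∧
    (∀ x ∈ II, HasDerivWithinAt f (derivWithin f II x) II x) ∧
    ContinuousOn (derivWithin f II) II ∧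
    ∀ x ∈ II, 0 < derivWithin f II x

/-- `f : ℝ → ℝ` restricts to an orientation-preserving `C^{1+α}` diffeomorphism of `[0,1]`:
a `C¹` diffeomorphism whose derivative is `α`-Hölder continuous. -/
def IsC1aDiffeoI (α : ℝ) (f : ℝ → ℝ) : Prop :=
  IsC1DiffeoI f ∧ ∃ C > 0, HolderOnI α C (derivWithin f II)

/-- `φ` is an action of `G` on `[0,1]`: `φ 1` is the identity on `[0,1]` and
`φ (g * h)` is the composition `φ g ∘ φ h` on `[0,1]`. -/
def IsActionOnI {G : Type*} [Group G] (φ : G → ℝ → ℝ) : Prop :=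
  Set.EqOn (φ 1) id II ∧ ∀ g h : G, Set.EqOn (φ (g * h)) (φ g ∘ φ h) II

/-- The action `φ` of `G` on `[0,1]` is faithful: elements acting identically
on `[0,1]` coincide. -/
def FaithfulOnI {G : Type*} [Group G] (φ : G → ℝ → ℝ) : Prop :=
  ∀ g h : G, Set.EqOn (φ g) (φ h) II → g = h

/-- `J_g(x) = [inf_{n ∈ ℤ} gⁿ(x), sup_{n ∈ ℤ} gⁿ(x)]` for the action `φ`. -/
noncomputable def Jseg {G : Type*} [Group G] (φ : G → ℝ → ℝ) (g : G) (x : ℝ) : Set ℝ :=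
  Set.Icc (⨅ n : ℤ, φ (g ^ n) x) (⨆ n : ℤ, φ (g ^ n) x)

/-- The map `f` moves the set `s`: `f(s)` and `s` are distinct and have
disjoint interiors. -/
def MovesSet (f : ℝ → ℝ) (s : Set ℝ) : Prop :=
  f '' s ≠ s ∧ Disjoint (interior (f '' s)) (interior s)

set_option linter.unusedSectionVars false
set_option linter.unusedVariables false

open Filter Topology

set_option linter.unusedSectionVars false

namespace NilpAct

variable {G : Type*} [Group G] {φ : G → ℝ → ℝ}
  (hact : IsActionOnI φ) (hhomeo : ∀ g : G, IsOPHomeoI (φ g))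
include hact hhomeo

section basic

lemma mem_II_of_between {x y z : ℝ} (hx : x ∈ II) (hy : y ∈ II) (h1 : x ≤ z) (h2 : z ≤ y) :
    z ∈ II := ⟨le_trans hx.1 h1, le_trans h2 hy.2⟩

lemma app_mem (e : G) {x : ℝ} (hx : x ∈ II) : φ e x ∈ II := (hhomeo e).1.mapsTo hx

lemma smono (e : G) : StrictMonoOn (φ e) II := (hhomeo e).2.1

lemma app_lt (e : G) {x y : ℝ} (hx : x ∈ II) (hy : y ∈ II) (h : x < y) : φ e x < φ e y :=
  (hhomeo e).2.1 hx hy h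

lemma app_le (e : G) {x y : ℝ} (hx : x ∈ II) (hy : y ∈ II) (h : x ≤ y) : φ e x ≤ φ e y := by
  rcases h.lt_or_eq with h | h
  · exact (app_lt hact hhomeo e hx hy h).le
  · rw [h]

lemma one_app {x : ℝ} (hx : x ∈ II) : φ 1 x = x := hact.1 hx

lemma mul_app (e₁ e₂ : G) {x : ℝ} (hx : x ∈ II) : φ (e₁ * e₂) x = φ e₁ (φ e₂ x) :=
  hact.2 e₁ e₂ hx

lemma inv_app (e : G) {x : ℝ} (hx : x ∈ II) : φ e⁻¹ (φ e x) = x := by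
  have := mul_app hact hhomeo e⁻¹ e hx
  rw [inv_mul_cancel] at this
  rw [← this, one_app hact hhomeo hx]

lemma app_inv (e : G) {x : ℝ} (hx : x ∈ II) : φ e (φ e⁻¹ x) = x := by
  have := inv_app hact hhomeo e⁻¹ hx
  rwa [inv_inv] at this

lemma fix_inv (e : G) {p : ℝ} (hp : p ∈ II) (hfix : φ e p = p) : φ e⁻¹ p = p := by
  conv_lhs => rw [← hfix]
  exact inv_app hact hhomeo e hp

lemma fix_pow (e : G) {p : ℝ} (hp : p ∈ II) (hfix : φ e p = p) (K : ℕ) : φ (e ^ K) p = p := by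
  induction K with
  | zero => rw [pow_zero]; exact one_app hact hhomeo hp
  | succ K ih => rw [pow_succ, mul_app hact hhomeo _ e hp, hfix, ih]

lemma fix_zpow (e : G) {p : ℝ} (hp : p ∈ II) (hfix : φ e p = p) (n : ℤ) : φ (e ^ n) p = p := by
  induction n using Int.induction_on with
  | zero => rw [zpow_zero]; exact one_app hact hhomeo hp
  | succ n ih => rw [show ((n:ℤ)+1) = 1 + n by ring, zpow_add, zpow_one,
      mul_app hact hhomeo _ _ hp, ih, hfix]
  | pred n ih =>
      rw [show (-(n:ℤ)-1) = (-1) + (-n) by ring, zpow_add,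
        mul_app hact hhomeo _ _ hp, ih, zpow_neg_one, fix_inv hact hhomeo e hp hfix]

lemma lt_app_inv (e : G) {x y : ℝ} (hx : x ∈ II) (hy : y ∈ II) (h : φ e x < y) :
    x < φ e⁻¹ y := by
  have hx' := app_mem hact hhomeo e hx
  have := app_lt hact hhomeo e⁻¹ hx' hy h
  rwa [inv_app hact hhomeo e hx] at this

lemma app_inv_lt (e : G) {x y : ℝ} (hx : x ∈ II) (hy : y ∈ II) (h : x < φ e y) :
    φ e⁻¹ x < y := by
  have hy' := app_mem hact hhomeo e hy
  have := app_lt hact hhomeo e⁻¹ hx hy' h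
  rwa [inv_app hact hhomeo e hy] at this

end basic

section pingpong

/-- The ping-pong / Mal'cev law contradiction. -/
lemma pingpong [Group.IsNilpotent G] (u v : G) (X Y : Set ℝ)
    (hXY : X ∪ Y ⊆ II) (hdisj : Disjoint X Y) {z : ℝ} (hz : z ∈ X ∪ Y)
    (hu : ∀ x ∈ X ∪ Y, φ u x ∈ X) (hv : ∀ x ∈ X ∪ Y, φ v x ∈ Y) : False := by
  classical
  -- the Mal'cev words
  let P : ℕ → G × G := fun n => Nat.rec (u, v) (fun _ p => (p.1 * p.2, p.2 * p.1)) n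
  have hP0 : P 0 = (u, v) := rfl
  have hPs : ∀ n, P (n+1) = ((P n).1 * (P n).2, (P n).2 * (P n).1) := fun n => rfl
  have key1 : ∀ n, ((P n).1)⁻¹ * (P n).2 ∈ (⊤ : Subgroup G).lowerCentralSeries n := by
    intro n
    induction n with
    | zero => exact Subgroup.mem_top _
    | succ n ih =>
        rw [hPs n]
        have hsucc : (⊤ : Subgroup G).lowerCentralSeries (n+1) = ⁅(⊤ : Subgroup G).lowerCentralSeries n, (⊤ : Subgroup G)⁆ := by
          rfl
        rw [hsucc]
        open commutatorElement in
        have heq : ((P n).1 * (P n).2)⁻¹ * ((P n).2 * (P n).1)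
            = ⁅(((P n).1)⁻¹ * (P n).2)⁻¹, ((P n).1)⁻¹⁆ := by group
        rw [heq]
        exact Subgroup.commutator_mem_commutator (Subgroup.inv_mem _ ih) (Subgroup.mem_top _)
  have key2 : ∀ n, ∀ x ∈ X ∪ Y, φ ((P n).1) x ∈ X ∧ φ ((P n).2) x ∈ Y := by
    intro n
    induction n with
    | zero => exact fun x hx => ⟨hu x hx, hv x hx⟩
    | succ n ih =>
        intro x hx
        rw [hPs n]
        have hxII : x ∈ II := hXY hx
        constructor
        · rw [mul_app hact hhomeo _ _ hxII]
          exact (ih _ (Set.mem_union_right _ (ih x hx).2)).1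
        · rw [mul_app hact hhomeo _ _ hxII]
          exact (ih _ (Set.mem_union_left _ (ih x hx).1)).2
  obtain ⟨n, hn⟩ := (Subgroup.nilpotent_iff_lowerCentralSeries (G := G)).mp inferInstance
  have h1 : ((P n).1)⁻¹ * (P n).2 = 1 := by
    have := key1 n; rw [hn, Subgroup.mem_bot] at this; exact this
  have heq : (P n).1 = (P n).2 := by
    have := congrArg (fun w => (P n).1 * w) h1
    simpa [mul_assoc] using this.symm
  obtain ⟨hX, hY⟩ := key2 n z hz
  rw [heq] at hX
  exact Set.disjoint_left.mp hdisj hX hY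

end pingpong

section attract

/-- Orbit of a point under an increasing map with fixed point `β` above converges to a fixed
point; if there are no fixed points in `[y, β)`, the orbit eventually exceeds any `t < β`. -/
lemma attract_up (e : G) {β y t : ℝ} (hβ : β ∈ II) (hy : y ∈ II)
    (fixβ : φ e β = β) (hyβ : y < β) (htβ : t < β)
    (hmove : ∀ x, y ≤ x → x < β → x < φ e x) : ∃ M : ℕ, t < φ (e ^ M) y := by
  set o : ℕ → ℝ := fun M => φ (e ^ M) y with ho
  have o0 : o 0 = y := by
    simp only [ho, pow_zero]; exact one_app hact hhomeo hy
  have omem : ∀ M, o M ∈ II := fun M => app_mem hact hhomeo _ hy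
  have ostep : ∀ M, o (M + 1) = φ e (o M) := by
    intro M
    simp only [ho, pow_succ']
    exact mul_app hact hhomeo e (e ^ M) hy
  have obdd : ∀ M, y ≤ o M ∧ o M < β := by
    intro M
    induction M with
    | zero => rw [o0]; exact ⟨le_refl y, hyβ⟩
    | succ M ih =>
        rw [ostep M]
        refine ⟨(ih.1.trans (hmove _ ih.1 ih.2).le), ?_⟩
        have := app_lt hact hhomeo e (omem M) hβ ih.2
        rwa [fixβ] at this
  have oinc : StrictMono o := by
    apply strictMono_nat_of_lt_succ
    intro M; rw [ostep M]; exact hmove _ (obdd M).1 (obdd M).2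
  have hbdd : BddAbove (Set.range o) := ⟨β, by rintro _ ⟨M, rfl⟩; exact (obdd M).2.le⟩
  set L := ⨆ M, o M with hL
  have hLle : L ≤ β := ciSup_le fun M => (obdd M).2.le
  have hLge : y ≤ L := by
    have := le_ciSup hbdd 0
    rwa [o0] at this
  have hLII : L ∈ II := mem_II_of_between hact hhomeo hy hβ hLge hLle
  have hLβ : L = β := by
    by_contra hne
    have hLlt : L < β := lt_of_le_of_ne hLle hne
    -- L is a fixed point of φ e
    have h1 : Tendsto o atTop (𝓝 L) := tendsto_atTop_ciSup oinc.monotone hbdd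
    have h1' : Tendsto o atTop (𝓝[II] L) :=
      tendsto_nhdsWithin_iff.mpr ⟨h1, Filter.Eventually.of_forall omem⟩
    have h2 : Tendsto (fun M => φ e (o M)) atTop (𝓝 (φ e L)) :=
      (((hhomeo e).2.2 L hLII).tendsto).comp h1'
    have h3 : Tendsto (fun M => o (M + 1)) atTop (𝓝 L) := h1.comp (tendsto_add_atTop_nat 1)
    have h4 : (fun M => φ e (o M)) = fun M => o (M + 1) := by
      funext M; rw [ostep M]
    rw [h4] at h2
    have hfL : φ e L = L := tendsto_nhds_unique h2 h3
    exact absurd hfL (ne_of_gt (hmove L hLge hLlt))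
  have : t < ⨆ M, o M := by rw [← hL] at *; rw [hLβ]; exact htβ
  exact exists_lt_of_lt_ciSup this

lemma attract_down (e : G) {α y t : ℝ} (hα : α ∈ II) (hy : y ∈ II)
    (fixα : φ e α = α) (hαy : α < y) (hαt : α < t)
    (hmove : ∀ x, α < x → x ≤ y → φ e x < x) : ∃ M : ℕ, φ (e ^ M) y < t := by
  set o : ℕ → ℝ := fun M => φ (e ^ M) y with ho
  have o0 : o 0 = y := by
    simp only [ho, pow_zero]; exact one_app hact hhomeo hy
  have omem : ∀ M, o M ∈ II := fun M => app_mem hact hhomeo _ hy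
  have ostep : ∀ M, o (M + 1) = φ e (o M) := by
    intro M
    simp only [ho, pow_succ']
    exact mul_app hact hhomeo e (e ^ M) hy
  have obdd : ∀ M, α < o M ∧ o M ≤ y := by
    intro M
    induction M with
    | zero => rw [o0]; exact ⟨hαy, le_refl y⟩
    | succ M ih =>
        rw [ostep M]
        refine ⟨?_, ((hmove _ ih.1 ih.2).le).trans ih.2⟩
        have := app_lt hact hhomeo e hα (omem M) ih.1
        rwa [fixα] at this
  have odec : StrictAnti o := by
    apply strictAnti_nat_of_succ_lt
    intro M; rw [ostep M]; exact hmove _ (obdd M).1 (obdd M).2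
  have hbdd : BddBelow (Set.range o) := ⟨α, by rintro _ ⟨M, rfl⟩; exact (obdd M).1.le⟩
  set L := ⨅ M, o M with hL
  have hLge : α ≤ L := le_ciInf fun M => (obdd M).1.le
  have hLle : L ≤ y := by
    have := ciInf_le hbdd 0
    rwa [o0] at this
  have hLII : L ∈ II := mem_II_of_between hact hhomeo hα hy hLge hLle
  have hLα : L = α := by
    by_contra hne
    have hLgt : α < L := lt_of_le_of_ne hLge (Ne.symm hne)
    have h1 : Tendsto o atTop (𝓝 L) := tendsto_atTop_ciInf odec.antitone hbdd
    have h1' : Tendsto o atTop (𝓝[II] L) :=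
      tendsto_nhdsWithin_iff.mpr ⟨h1, Filter.Eventually.of_forall omem⟩
    have h2 : Tendsto (fun M => φ e (o M)) atTop (𝓝 (φ e L)) :=
      (((hhomeo e).2.2 L hLII).tendsto).comp h1'
    have h3 : Tendsto (fun M => o (M + 1)) atTop (𝓝 L) := h1.comp (tendsto_add_atTop_nat 1)
    have h4 : (fun M => φ e (o M)) = fun M => o (M + 1) := by
      funext M; rw [ostep M]
    rw [h4] at h2
    have hfL : φ e L = L := tendsto_nhds_unique h2 h3
    exact absurd hfL (ne_of_lt (hmove L hLgt hLle))
  have : (⨅ M, o M) < t := by rw [← hL] at *; rw [hLα]; exact hαt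
  exact exists_lt_of_ciInf_lt this

/-- If `e` fixes `α` and `δ` and pushes everything in `(α, δ)` to the right, then its inverse
pulls everything in `(α, δ)` to the left. -/
lemma inv_move_down (e : G) {α δ : ℝ} (hα : α ∈ II) (hδ : δ ∈ II)
    (fixα : φ e α = α) (fixδ : φ e δ = δ)
    (hmove : ∀ y, α < y → y < δ → y < φ e y) :
    ∀ x, α < x → x < δ → φ e⁻¹ x < x := by
  intro x h1 h2
  have hx : x ∈ II := mem_II_of_between hact hhomeo hα hδ h1.le h2.le
  have hx' : φ e⁻¹ x ∈ II := app_mem hact hhomeo e⁻¹ hx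
  have h1' : α < φ e⁻¹ x := by
    have : φ e α < x := by rwa [fixα]
    exact lt_app_inv hact hhomeo e hα hx this
  have h2' : φ e⁻¹ x < δ := by
    have : x < φ e δ := by rwa [fixδ]
    exact app_inv_lt hact hhomeo e hx hδ this
  have := hmove _ h1' h2'
  rwa [app_inv hact hhomeo e hx] at this

end attract

section configs

variable [Group.IsNilpotent G]

/-- conjugation formula -/
lemma conj_app (e f : G) {x : ℝ} (hx : x ∈ II) :
    φ (e * f * e⁻¹) x = φ e (φ f (φ e⁻¹ x)) := by
  have hx1 : φ e⁻¹ x ∈ II := app_mem hact hhomeo e⁻¹ hx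
  rw [mul_app hact hhomeo (e * f) e⁻¹ hx, mul_app hact hhomeo e f hx1]

/-- Configuration: `e₁` is translation-like on `(a,b)`, `e₂ a ∈ (a,b)`, `e₂ b ≥ b`. -/
lemma case1 (e₁ e₂ : G) {a b : ℝ} (ha : a ∈ II) (hb : b ∈ II) (hab : a < b)
    (fixa : φ e₁ a = a) (fixb : φ e₁ b = b)
    (hmove : ∀ x, a < x → x < b → x < φ e₁ x)
    (h1 : a < φ e₂ a) (h2 : φ e₂ a < b) (h3 : b ≤ φ e₂ b) : False := by
  set c := φ e₂ a with hc
  set d₂ := φ e₂ b with hd₂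
  have hcII : c ∈ II := app_mem hact hhomeo e₂ ha
  have hd₂II : d₂ ∈ II := app_mem hact hhomeo e₂ hb
  have hcd₂ : c < d₂ := h2.trans_le h3
  set w := e₂ * e₁ * e₂⁻¹ with hw
  have wc : φ w c = c := by
    rw [hw, conj_app hact hhomeo e₂ e₁ hcII, hc, inv_app hact hhomeo e₂ ha, fixa]
  have wd : φ w d₂ = d₂ := by
    rw [hw, conj_app hact hhomeo e₂ e₁ hd₂II, hd₂, inv_app hact hhomeo e₂ hb, fixb]
  have wmove : ∀ y, c < y → y < d₂ → y < φ w y := by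
    intro y hy1 hy2
    have hyII : y ∈ II := mem_II_of_between hact hhomeo hcII hd₂II hy1.le hy2.le
    have hz : φ e₂⁻¹ y ∈ II := app_mem hact hhomeo e₂⁻¹ hyII
    have hz1 : a < φ e₂⁻¹ y := lt_app_inv hact hhomeo e₂ ha hyII (by rwa [← hc])
    have hz2 : φ e₂⁻¹ y < b := app_inv_lt hact hhomeo e₂ hyII hb (by rwa [← hd₂])
    have hmv := hmove _ hz1 hz2
    have := app_lt hact hhomeo e₂ hz (app_mem hact hhomeo e₁ hz) hmv
    rw [app_inv hact hhomeo e₂ hyII] at this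
    rw [hw, conj_app hact hhomeo e₂ e₁ hyII]
    exact this
  -- pick s between c and b
  set s := (c + b) / 2 with hs
  have hs1 : c < s := by rw [hs]; linarith
  have hs2 : s < b := by rw [hs]; linarith
  have hsII : s ∈ II := mem_II_of_between hact hhomeo hcII hb hs1.le hs2.le
  -- K with s < φ (e₁ ^ K) c
  obtain ⟨K, hK⟩ := attract_up hact hhomeo e₁ hb hcII fixb h2 hs2
    (fun x hx1 hx2 => hmove x (h1.trans_le hx1) hx2)
  set c₁ := φ (e₁ ^ K) c with hc₁
  set s₁ := φ (e₁ ^ K) s with hs₁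
  have hc₁II : c₁ ∈ II := app_mem hact hhomeo _ hcII
  have hs₁II : s₁ ∈ II := app_mem hact hhomeo _ hsII
  have hc₁s₁ : c₁ ≤ s₁ := app_le hact hhomeo _ hcII hsII hs1.le
  have hs₁b : s₁ < b := by
    have := app_lt hact hhomeo (e₁ ^ K) hsII hb hs2
    rwa [fix_pow hact hhomeo e₁ hb fixb K] at this
  have hcs₁ : c < s₁ := hs1.trans (hK.trans_le hc₁s₁)
  -- M with φ (w⁻¹ ^ M) s₁ < s
  have winvmove : ∀ x, c < x → x ≤ s₁ → φ w⁻¹ x < x := by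
    intro x hx1 hx2
    exact inv_move_down hact hhomeo w hcII hd₂II wc wd wmove x hx1
      (lt_of_le_of_lt hx2 (hs₁b.trans_le h3))
  obtain ⟨M, hM⟩ := attract_down hact hhomeo w⁻¹ hcII hs₁II
    (fix_inv hact hhomeo w hcII wc) hcs₁ hs1 winvmove
  set u := w⁻¹ ^ M with hu
  set v := e₁ ^ K * w⁻¹ ^ M with hv
  set X := Set.Icc c s with hX
  set Y := Set.Icc c₁ s₁ with hY
  have hXY : X ∪ Y ⊆ II := by
    rintro x (hx | hx)
    · exact mem_II_of_between hact hhomeo hcII hsII hx.1 hx.2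
    · exact mem_II_of_between hact hhomeo hc₁II hs₁II hx.1 hx.2
  have hbounds : ∀ x ∈ X ∪ Y, c ≤ x ∧ x ≤ s₁ := by
    rintro x (hx | hx)
    · exact ⟨hx.1, hx.2.trans ((hK.trans_le hc₁s₁).le)⟩
    · exact ⟨(hs1.le.trans hK.le).trans hx.1, hx.2⟩
  have huX : ∀ x ∈ X ∪ Y, φ u x ∈ X := by
    intro x hx
    have hxII : x ∈ II := hXY hx
    obtain ⟨hx1, hx2⟩ := hbounds x hx
    constructor
    · have := app_le hact hhomeo u hcII hxII hx1
      rwa [hu, fix_pow hact hhomeo w⁻¹ hcII (fix_inv hact hhomeo w hcII wc) M] at this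
    · exact (app_le hact hhomeo u hxII hs₁II hx2).trans hM.le
  have hvY : ∀ x ∈ X ∪ Y, φ v x ∈ Y := by
    intro x hx
    have hxII : x ∈ II := hXY hx
    have hux : φ u x ∈ X := huX x hx
    have huxII : φ u x ∈ II := app_mem hact hhomeo u hxII
    rw [hv, mul_app hact hhomeo _ _ hxII]
    exact ⟨app_le hact hhomeo _ hcII huxII hux.1, app_le hact hhomeo _ huxII hsII hux.2⟩
  have hzX : c ∈ X := ⟨le_refl c, hs1.le⟩
  have hdisj : Disjoint X Y :=
    Set.disjoint_left.mpr (fun x hx hx' => absurd (hx'.1.trans hx.2) (not_le.mpr hK))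
  exact pingpong hact hhomeo u v X Y hXY hdisj (Set.mem_union_left _ hzX) huX hvY

/-- Mirror configuration: `e₁` translation-like on `(a,b)`, `e₂ b ∈ (a,b)`, `e₂ a ≤ a`. -/
lemma case1m (e₁ e₂ : G) {a b : ℝ} (ha : a ∈ II) (hb : b ∈ II) (hab : a < b)
    (fixa : φ e₁ a = a) (fixb : φ e₁ b = b)
    (hmove : ∀ x, a < x → x < b → x < φ e₁ x)
    (h1 : φ e₂ b < b) (h2 : a < φ e₂ b) (h3 : φ e₂ a ≤ a) : False := by
  set d' := φ e₂ b with hd'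
  set c₂ := φ e₂ a with hc₂
  have hd'II : d' ∈ II := app_mem hact hhomeo e₂ hb
  have hc₂II : c₂ ∈ II := app_mem hact hhomeo e₂ ha
  have hc₂d' : c₂ < d' := h3.trans_lt h2
  set w := e₂ * e₁ * e₂⁻¹ with hw
  have wc : φ w c₂ = c₂ := by
    rw [hw, conj_app hact hhomeo e₂ e₁ hc₂II, hc₂, inv_app hact hhomeo e₂ ha, fixa]
  have wd : φ w d' = d' := by
    rw [hw, conj_app hact hhomeo e₂ e₁ hd'II, hd', inv_app hact hhomeo e₂ hb, fixb]
  have wmove : ∀ y, c₂ < y → y < d' → y < φ w y := by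
    intro y hy1 hy2
    have hyII : y ∈ II := mem_II_of_between hact hhomeo hc₂II hd'II hy1.le hy2.le
    have hz : φ e₂⁻¹ y ∈ II := app_mem hact hhomeo e₂⁻¹ hyII
    have hz1 : a < φ e₂⁻¹ y := lt_app_inv hact hhomeo e₂ ha hyII (by rwa [← hc₂])
    have hz2 : φ e₂⁻¹ y < b := app_inv_lt hact hhomeo e₂ hyII hb (by rwa [← hd'])
    have hmv := hmove _ hz1 hz2
    have := app_lt hact hhomeo e₂ hz (app_mem hact hhomeo e₁ hz) hmv
    rw [app_inv hact hhomeo e₂ hyII] at this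
    rw [hw, conj_app hact hhomeo e₂ e₁ hyII]
    exact this
  set s := (a + d') / 2 with hs
  have hs1 : a < s := by rw [hs]; linarith
  have hs2 : s < d' := by rw [hs]; linarith
  have hsII : s ∈ II := mem_II_of_between hact hhomeo ha hd'II hs1.le hs2.le
  -- K with φ (e₁⁻¹ ^ K) d' < s
  have e₁invmove : ∀ x, a < x → x ≤ d' → φ e₁⁻¹ x < x := by
    intro x hx1 hx2
    exact inv_move_down hact hhomeo e₁ ha hb fixa fixb hmove x hx1 (hx2.trans_lt h1)
  obtain ⟨K, hK⟩ := attract_down hact hhomeo e₁⁻¹ ha hd'II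
    (fix_inv hact hhomeo e₁ ha fixa) h2 hs1 e₁invmove
  set d'' := φ (e₁⁻¹ ^ K) d' with hd''
  set s'' := φ (e₁⁻¹ ^ K) s with hs''
  have hd''II : d'' ∈ II := app_mem hact hhomeo _ hd'II
  have hs''II : s'' ∈ II := app_mem hact hhomeo _ hsII
  have hs''d'' : s'' ≤ d'' := app_le hact hhomeo _ hsII hd'II hs2.le
  have has'' : a < s'' := by
    have := app_lt hact hhomeo (e₁⁻¹ ^ K) ha hsII hs1
    rwa [fix_pow hact hhomeo e₁⁻¹ ha (fix_inv hact hhomeo e₁ ha fixa) K] at this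
  have hs''s : s'' < s := hs''d''.trans_lt hK
  -- M with s < φ (w ^ M) s''
  obtain ⟨M, hM⟩ := attract_up hact hhomeo w hd'II hs''II wd (hs''s.trans hs2) hs2
    (fun x hx1 hx2 => wmove x (lt_of_le_of_lt h3 (has''.trans_le hx1)) hx2)
  set u := w ^ M with hu
  set v := e₁⁻¹ ^ K * w ^ M with hv
  set X := Set.Icc s d' with hX
  set Y := Set.Icc s'' d'' with hY
  have hXY : X ∪ Y ⊆ II := by
    rintro x (hx | hx)
    · exact mem_II_of_between hact hhomeo hsII hd'II hx.1 hx.2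
    · exact mem_II_of_between hact hhomeo hs''II hd''II hx.1 hx.2
  have hbounds : ∀ x ∈ X ∪ Y, s'' ≤ x ∧ x ≤ d' := by
    rintro x (hx | hx)
    · exact ⟨hs''s.le.trans hx.1, hx.2⟩
    · exact ⟨hx.1, hx.2.trans (hK.le.trans hs2.le)⟩
  have huX : ∀ x ∈ X ∪ Y, φ u x ∈ X := by
    intro x hx
    have hxII : x ∈ II := hXY hx
    obtain ⟨hx1, hx2⟩ := hbounds x hx
    constructor
    · exact hM.le.trans (app_le hact hhomeo u hs''II hxII hx1)
    · have := app_le hact hhomeo u hxII hd'II hx2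
      rwa [hu, fix_pow hact hhomeo w hd'II wd M] at this
  have hvY : ∀ x ∈ X ∪ Y, φ v x ∈ Y := by
    intro x hx
    have hxII : x ∈ II := hXY hx
    have hux : φ u x ∈ X := huX x hx
    have huxII : φ u x ∈ II := app_mem hact hhomeo u hxII
    rw [hv, mul_app hact hhomeo _ _ hxII]
    exact ⟨app_le hact hhomeo _ hsII huxII hux.1, app_le hact hhomeo _ huxII hd'II hux.2⟩
  have hzX : d' ∈ X := ⟨hs2.le, le_refl d'⟩
  have hdisj : Disjoint X Y :=
    Set.disjoint_left.mpr (fun x hx hx' => absurd (hx.1.trans hx'.2) (not_le.mpr hK))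
  exact pingpong hact hhomeo u v X Y hXY hdisj (Set.mem_union_left _ hzX) huX hvY

/-- Proper crossing: `e₁` translation-like on `(a,b)`, `e₂` fixes `A ∈ (a,b)` and pushes
`[a, A)` strictly to the right. -/
lemma crossing (e₁ e₂ : G) {a b A : ℝ} (ha : a ∈ II) (hb : b ∈ II) (hab : a < b)
    (fixa : φ e₁ a = a) (fixb : φ e₁ b = b)
    (hmove : ∀ x, a < x → x < b → x < φ e₁ x)
    (hA : A ∈ II) (haA : a < A) (hAb : A < b) (fixA : φ e₂ A = A)
    (hmove₂ : ∀ x, a ≤ x → x < A → x < φ e₂ x) : False := by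
  set x₂ := a + (A - a) / 3 with hx₂def
  set y₁ := a + 2 * (A - a) / 3 with hy₁def
  have h1 : a < x₂ := by rw [hx₂def]; linarith
  have h2 : x₂ < y₁ := by rw [hx₂def, hy₁def]; linarith
  have h3 : y₁ < A := by rw [hy₁def]; linarith
  have hx₂II : x₂ ∈ II := mem_II_of_between hact hhomeo ha hA h1.le (h2.trans h3).le
  have hy₁II : y₁ ∈ II := mem_II_of_between hact hhomeo ha hA (h1.trans h2).le h3.le
  -- K with φ (e₁⁻¹ ^ K) A < x₂
  have e₁invmove : ∀ x, a < x → x ≤ A → φ e₁⁻¹ x < x := by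
    intro x hh1 hh2
    exact inv_move_down hact hhomeo e₁ ha hb fixa fixb hmove x hh1 (hh2.trans_lt hAb)
  obtain ⟨K, hK⟩ := attract_down hact hhomeo e₁⁻¹ ha hA
    (fix_inv hact hhomeo e₁ ha fixa) haA h1 e₁invmove
  -- M with y₁ < φ (e₂ ^ M) a
  obtain ⟨M, hM⟩ := attract_up hact hhomeo e₂ hA ha fixA haA h3
    (fun x hh1 hh2 => hmove₂ x hh1 hh2)
  set u := e₁⁻¹ ^ K with hu
  set v := e₂ ^ M with hv
  set X := Set.Ioc a x₂ with hX
  set Y := Set.Icc y₁ A with hY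
  have hXY : X ∪ Y ⊆ II := by
    rintro x (hx | hx)
    · exact mem_II_of_between hact hhomeo ha hx₂II hx.1.le hx.2
    · exact mem_II_of_between hact hhomeo hy₁II hA hx.1 hx.2
  have hbounds : ∀ x ∈ X ∪ Y, a < x ∧ x ≤ A := by
    rintro x (hx | hx)
    · exact ⟨hx.1, hx.2.trans (h2.trans h3).le⟩
    · exact ⟨(h1.trans h2).trans_le hx.1, hx.2⟩
  have huX : ∀ x ∈ X ∪ Y, φ u x ∈ X := by
    intro x hx
    have hxII : x ∈ II := hXY hx
    obtain ⟨hx1, hx2⟩ := hbounds x hx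
    constructor
    · have := app_lt hact hhomeo u ha hxII hx1
      rwa [hu, fix_pow hact hhomeo e₁⁻¹ ha (fix_inv hact hhomeo e₁ ha fixa) K] at this
    · exact (app_le hact hhomeo u hxII hA hx2).trans hK.le
  have hvY : ∀ x ∈ X ∪ Y, φ v x ∈ Y := by
    intro x hx
    have hxII : x ∈ II := hXY hx
    obtain ⟨hx1, hx2⟩ := hbounds x hx
    constructor
    · exact hM.le.trans (app_lt hact hhomeo v ha hxII hx1).le
    · have := app_le hact hhomeo v hxII hA hx2
      rwa [hv, fix_pow hact hhomeo e₂ hA fixA M] at this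
  have hzY : A ∈ Y := ⟨h3.le, le_refl A⟩
  have hdisj : Disjoint X Y :=
    Set.disjoint_left.mpr (fun x hx hx' => absurd (hx'.1.trans hx.2) (not_le.mpr h2))
  exact pingpong hact hhomeo u v X Y hXY hdisj (Set.mem_union_right _ hzY) huX hvY

/-- Interior configuration: `e₂` maps `[a,b]` strictly inside `(a,b)` on the left, and
strictly down on the right. -/
lemma inside (e₁ e₂ : G) {a b : ℝ} (ha : a ∈ II) (hb : b ∈ II) (hab : a < b)
    (fixa : φ e₁ a = a) (fixb : φ e₁ b = b)
    (hmove : ∀ x, a < x → x < b → x < φ e₁ x)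
    (hc : a < φ e₂ a) (hd : φ e₂ b < b) : False := by
  set T := {x : ℝ | x ∈ Set.Icc a b ∧ φ e₂ x ≤ x} with hT
  have hbT : b ∈ T := ⟨⟨hab.le, le_refl b⟩, hd.le⟩
  have hTne : T.Nonempty := ⟨b, hbT⟩
  have hTbdd : BddBelow T := ⟨a, fun x hx => hx.1.1⟩
  set A := sInf T with hA
  have hAa : a ≤ A := le_csInf hTne (fun x hx => hx.1.1)
  have hAb : A ≤ b := csInf_le hTbdd hbT
  have hAII : A ∈ II := mem_II_of_between hact hhomeo ha hb hAa hAb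
  have hTII : T ⊆ II := fun x hx => mem_II_of_between hact hhomeo ha hb hx.1.1 hx.1.2
  have hmove₂ : ∀ x, a ≤ x → x < A → x < φ e₂ x := by
    intro x h1 h2
    by_contra hcon
    push_neg at hcon
    have hxT : x ∈ T := ⟨⟨h1, h2.le.trans hAb⟩, hcon⟩
    exact absurd (csInf_le hTbdd hxT) (not_le.mpr h2)
  have hcont : ContinuousOn (fun x => φ e₂ x - x) II :=
    (hhomeo e₂).2.2.sub continuousOn_id
  have hψle : φ e₂ A ≤ A := by
    have hA_cl : A ∈ closure T := csInf_mem_closure hTne hTbdd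
    have cwa : ContinuousWithinAt (fun x => φ e₂ x - x) T A :=
      (hcont A hAII).mono hTII
    have hmem := cwa.mem_closure_image hA_cl
    have hsub : (fun x => φ e₂ x - x) '' T ⊆ Set.Iic 0 := by
      rintro _ ⟨x, hx, rfl⟩; simpa using hx.2
    have := (closure_mono hsub) hmem
    rw [closure_Iic] at this
    simpa using this
  have hAa' : a < A := by
    rcases hAa.lt_or_eq with h | h
    · exact h
    · exfalso; rw [← h] at hψle; exact absurd hψle (not_le.mpr hc)
  have hψge : A ≤ φ e₂ A := by
    have hA_cl : A ∈ closure (Set.Ico a A) := by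
      rw [closure_Ico (ne_of_lt hAa')]; exact ⟨hAa, le_refl A⟩
    have hIcoII : Set.Ico a A ⊆ II := fun x hx =>
      mem_II_of_between hact hhomeo ha hAII hx.1 hx.2.le
    have cwa : ContinuousWithinAt (fun x => φ e₂ x - x) (Set.Ico a A) A :=
      (hcont A hAII).mono hIcoII
    have hmem := cwa.mem_closure_image hA_cl
    have hsub : (fun x => φ e₂ x - x) '' Set.Ico a A ⊆ Set.Ici 0 := by
      rintro _ ⟨x, hx, rfl⟩
      simpa using (hmove₂ x hx.1 hx.2).le
    have := (closure_mono hsub) hmem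
    rw [closure_Ici] at this
    simpa using this
  have fixA : φ e₂ A = A := le_antisymm hψle hψge
  have hAb' : A < b := by
    rcases hAb.lt_or_eq with h | h
    · exact h
    · exfalso; rw [h] at fixA; exact absurd fixA (ne_of_lt hd)
  exact crossing hact hhomeo e₁ e₂ ha hb hab fixa fixb hmove hAII hAa' hAb' fixA hmove₂

end configs


section main

variable [Group.IsNilpotent G]

lemma main (x₀ : ℝ) (hx₀ : x₀ ∈ II) (g h : G) (hgt : x₀ < φ g x₀) :
    φ h '' Jseg φ g x₀ = Jseg φ g x₀ ∨
      Disjoint (interior (φ h '' Jseg φ g x₀)) (interior (Jseg φ g x₀)) := by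
  classical
  set o : ℤ → ℝ := fun n => φ (g ^ n) x₀ with ho
  have omem : ∀ n, o n ∈ II := fun n => app_mem hact hhomeo _ hx₀
  have ostep : ∀ n : ℤ, o (n + 1) = φ g (o n) := by
    intro n
    show φ (g ^ (n+1)) x₀ = φ g (φ (g ^ n) x₀)
    rw [show (n + 1 : ℤ) = 1 + n by ring, zpow_add, zpow_one, mul_app hact hhomeo g (g ^ n) hx₀]
  have ostep' : ∀ n : ℤ, o n = φ g (o (n - 1)) := by
    intro n
    have := ostep (n - 1)
    rwa [sub_add_cancel] at this
  have oinvstep : ∀ n : ℤ, φ g⁻¹ (o (n + 1)) = o n := by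
    intro n
    rw [ostep n]
    exact inv_app hact hhomeo g (omem n)
  have o_inc : ∀ n : ℤ, o n < o (n + 1) := by
    have key : ∀ m : ℤ, o m < o (m + 1) → o (m - 1) < o m := by
      intro m hm
      by_contra hcon
      push_neg at hcon
      have := app_le hact hhomeo g (omem m) (omem (m-1)) hcon
      rw [← ostep m, ← ostep' m] at this
      exact absurd this (not_le.mpr hm)
    intro n
    induction n using Int.induction_on with
    | zero => simpa [ho, zpow_zero, zpow_one, one_app hact hhomeo hx₀] using hgt
    | succ n ih =>
        rw [ostep n, ostep (n + 1)]
        exact app_lt hact hhomeo g (omem n) (omem (n+1)) ih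
    | pred n ih =>
        have := key (-n) ih
        simpa [sub_eq_add_neg, add_comm] using this
  have osm : StrictMono o := strictMono_int_of_lt_succ o_inc
  have bddB : BddBelow (Set.range o) := ⟨0, by rintro _ ⟨n, rfl⟩; exact (omem n).1⟩
  have bddA : BddAbove (Set.range o) := ⟨1, by rintro _ ⟨n, rfl⟩; exact (omem n).2⟩
  set a := ⨅ n : ℤ, o n with hadef
  set b := ⨆ n : ℤ, o n with hbdef
  have haII : a ∈ II :=
    ⟨le_ciInf (fun n => (omem n).1), (ciInf_le bddB 0).trans (omem 0).2⟩
  have hbII : b ∈ II :=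
    ⟨(omem 0).1.trans (le_ciSup bddA 0), ciSup_le (fun n => (omem n).2)⟩
  have hab : a < b :=
    (ciInf_le bddB 0).trans_lt ((o_inc 0).trans_le (le_ciSup bddA 1))
  have fixa : φ g a = a := by
    have hle : ∀ n, a ≤ o n := fun n => ciInf_le bddB n
    have h1 : φ g a ≤ a := by
      refine le_ciInf fun n => ?_
      calc φ g a ≤ φ g (o (n - 1)) := app_le hact hhomeo g haII (omem _) (hle _)
        _ = o n := (ostep' n).symm
    have h2 : φ g⁻¹ a ≤ a := by
      refine le_ciInf fun n => ?_
      calc φ g⁻¹ a ≤ φ g⁻¹ (o (n + 1)) := app_le hact hhomeo g⁻¹ haII (omem _) (hle _)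
        _ = o n := oinvstep n
    refine le_antisymm h1 ?_
    have := app_le hact hhomeo g (app_mem hact hhomeo g⁻¹ haII) haII h2
    rwa [app_inv hact hhomeo g haII] at this
  have fixb : φ g b = b := by
    have hle : ∀ n, o n ≤ b := fun n => le_ciSup bddA n
    have h1 : b ≤ φ g b := by
      refine ciSup_le fun n => ?_
      calc o n = φ g (o (n - 1)) := ostep' n
        _ ≤ φ g b := app_le hact hhomeo g (omem _) hbII (hle _)
    have h2 : b ≤ φ g⁻¹ b := by
      refine ciSup_le fun n => ?_
      calc o n = φ g⁻¹ (o (n + 1)) := (oinvstep n).symm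
        _ ≤ φ g⁻¹ b := app_le hact hhomeo g⁻¹ (omem _) hbII (hle _)
    refine le_antisymm ?_ h1
    have := app_le hact hhomeo g hbII (app_mem hact hhomeo g⁻¹ hbII) h2
    rwa [app_inv hact hhomeo g hbII] at this
  have gmove : ∀ y, a < y → y < b → y < φ g y := by
    intro y hy1 hy2
    have hyII : y ∈ II := mem_II_of_between hact hhomeo haII hbII hy1.le hy2.le
    obtain ⟨n₀, hn₀⟩ := exists_lt_of_ciInf_lt (show ⨅ n, o n < y from hy1)
    obtain ⟨m, hm⟩ := exists_lt_of_lt_ciSup (show y < ⨆ n, o n from hy2)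
    obtain ⟨N, hN, hNmax⟩ := Int.exists_greatest_of_bdd
      (P := fun n : ℤ => o n ≤ y)
      ⟨m, fun z hz => (osm.lt_iff_lt.mp (hz.trans_lt hm)).le⟩ ⟨n₀, hn₀.le⟩
    have hN1 : y < o (N + 1) := by
      by_contra hcon
      push_neg at hcon
      have := hNmax (N + 1) hcon
      omega
    have := app_le hact hhomeo g (omem N) hyII hN
    rw [← ostep N] at this
    exact hN1.trans_le this
  have hJ : Jseg φ g x₀ = Set.Icc a b := rfl
  set c := φ h a with hcdef
  set d := φ h b with hddef
  have hcII : c ∈ II := app_mem hact hhomeo h haII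
  have hdII : d ∈ II := app_mem hact hhomeo h hbII
  have hcd : c < d := app_lt hact hhomeo h haII hbII hab
  have hIccII : Set.Icc a b ⊆ II := fun x hx =>
    mem_II_of_between hact hhomeo haII hbII hx.1 hx.2
  have himg : φ h '' Set.Icc a b = Set.Icc c d := by
    apply Set.Subset.antisymm
    · rintro _ ⟨x, hx, rfl⟩
      have hxII : x ∈ II := hIccII hx
      exact ⟨app_le hact hhomeo h haII hxII hx.1, app_le hact hhomeo h hxII hbII hx.2⟩
    · exact intermediate_value_Icc hab.le ((hhomeo h).2.2.mono hIccII)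
  by_cases heq : c = a ∧ d = b
  · left
    rw [hJ, himg, heq.1, heq.2]
  by_cases hsep : d ≤ a ∨ b ≤ c
  · right
    rw [hJ, himg, interior_Icc, interior_Icc]
    refine Set.disjoint_left.mpr fun x hx hx' => ?_
    rcases hsep with hs | hs
    · exact absurd (hx.2.trans_le (hs.trans hx'.1.le)) (lt_irrefl x)
    · exact absurd (hx'.2.trans_le (hs.trans hx.1.le)) (lt_irrefl x)
  exfalso
  push_neg at hsep
  obtain ⟨had, hcb⟩ := hsep
  rcases lt_trichotomy a c with hac | hac | hac
  · rcases le_or_gt b d with hbd | hbd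
    · exact case1 hact hhomeo g h haII hbII hab fixa fixb gmove hac hcb hbd
    · exact inside hact hhomeo g h haII hbII hab fixa fixb gmove hac hbd
  · rcases lt_trichotomy d b with hdb | hdb | hdb
    · exact case1m hact hhomeo g h haII hbII hab fixa fixb gmove hdb had hac.ge
    · exact heq ⟨hac.symm, hdb⟩
    · -- c = a, b < d : switch to h⁻¹
      have fixc : φ h a = a := hac.symm
      have fc : φ h⁻¹ a = a := fix_inv hact hhomeo h haII fixc
      have hd' : φ h⁻¹ b < b := app_inv_lt hact hhomeo h hbII hbII (show b < φ h b from hdb)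
      have h2' : a < φ h⁻¹ b :=
        lt_app_inv hact hhomeo h haII hbII (show φ h a < b by rw [fixc]; exact hab)
      exact case1m hact hhomeo g h⁻¹ haII hbII hab fixa fixb gmove hd' h2' fc.le
  · rcases lt_trichotomy d b with hdb | hdb | hdb
    · exact case1m hact hhomeo g h haII hbII hab fixa fixb gmove hdb had hac.le
    · -- c < a, d = b : switch to h⁻¹
      have fixd : φ h b = b := hdb
      have fb : φ h⁻¹ b = b := fix_inv hact hhomeo h hbII fixd
      have h1' : a < φ h⁻¹ a := lt_app_inv hact hhomeo h haII haII (show φ h a < a from hac)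
      have h2' : φ h⁻¹ a < b :=
        app_inv_lt hact hhomeo h haII hbII (show a < φ h b by rw [fixd]; exact hab)
      exact case1 hact hhomeo g h⁻¹ haII hbII hab fixa fixb gmove h1' h2' fb.ge
    · -- c < a, b < d : switch to h⁻¹
      have h1' : a < φ h⁻¹ a := lt_app_inv hact hhomeo h haII haII (show φ h a < a from hac)
      have hd'' : φ h⁻¹ b < b := app_inv_lt hact hhomeo h hbII hbII (show b < φ h b from hdb)
      exact inside hact hhomeo g h⁻¹ haII hbII hab fixa fixb gmove h1' hd''

end main

end NilpAct


/-- For a nilpotent group `G` acting by orientation-preserving homeomorphisms of `[0,1]`,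
any image `h(J_g(x₀))` either equals `J_g(x₀)` or has interior disjoint from that of
`J_g(x₀)`. -/
theorem nilpotent_image_eq_or_disjoint_interior
    {G : Type*} [Group G] [Group.IsNilpotent G] (φ : G → ℝ → ℝ)
    (hact : IsActionOnI φ) (hhomeo : ∀ g : G, IsOPHomeoI (φ g))
    (x₀ : ℝ) (hx₀ : x₀ ∈ II) (g h : G) :
    φ h '' Jseg φ g x₀ = Jseg φ g x₀ ∨
      Disjoint (interior (φ h '' Jseg φ g x₀)) (interior (Jseg φ g x₀)) := by
  rcases lt_trichotomy x₀ (φ g x₀) with hgt | heq | hlt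
  · exact NilpAct.main hact hhomeo x₀ hx₀ g h hgt
  · right
    have hfix : φ g x₀ = x₀ := heq.symm
    have hall : ∀ n : ℤ, φ (g ^ n) x₀ = x₀ := NilpAct.fix_zpow hact hhomeo g hx₀ hfix
    have hJ : Jseg φ g x₀ = Set.Icc x₀ x₀ := by
      unfold Jseg
      simp only [hall, ciInf_const, ciSup_const]
    rw [hJ, Set.Icc_self]
    simp
  · have hgt' : x₀ < φ g⁻¹ x₀ := NilpAct.lt_app_inv hact hhomeo g hx₀ hx₀ hlt
    have hJJ : Jseg φ g x₀ = Jseg φ g⁻¹ x₀ := by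
      unfold Jseg
      have he : ∀ n : ℤ, (g⁻¹ : G) ^ n = g ^ (-n) := fun n => by rw [inv_zpow, zpow_neg]
      have h1 : (⨅ n : ℤ, φ (g⁻¹ ^ n) x₀) = ⨅ n : ℤ, φ (g ^ n) x₀ := by
        simp_rw [he]
        exact Function.Surjective.iInf_comp (fun m => ⟨-m, by ring⟩) (fun m => φ (g ^ m) x₀)
      have h2 : (⨆ n : ℤ, φ (g⁻¹ ^ n) x₀) = ⨆ n : ℤ, φ (g ^ n) x₀ := by
        simp_rw [he]
        exact Function.Surjective.iSup_comp (fun m => ⟨-m, by ring⟩) (fun m => φ (g ^ m) x₀)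
      rw [h1, h2]
    rw [hJJ]
    exact NilpAct.main hact hhomeo x₀ hx₀ g⁻¹ h hgt'
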